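/- Every real Banach space of universal disposition for separable spaces is 1-separably injective: for every separable real Banach space X, every closed subspace Y ⊆ X, and every bounded linear operator t : Y → E, there exists a bounded linear extension T : X → E with ‖T‖ ≤ ‖t‖. -/

import Mathlib

set_option synthInstance.maxHeartbeats 1000000
set_option maxHeartbeats 1000000


/-- A real Banach space `U` is of universal disposition for separable spaces if for every
pair of separable real Banach spaces `A` and `B`, every linear isometric embedding
`u : A → U` and every linear isometric embedding `j : A → B`, there is a linear isometric
embedding `u' : B → U` with `u' ∘ j = u`. -/
def UnivDispSeparable (U : Type*) [NormedAddCommGroup U] [NormedSpace ℝ U] : Prop :=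
  ∀ (A B : Type) [NormedAddCommGroup A] [NormedSpace ℝ A] [CompleteSpace A]
    [TopologicalSpace.SeparableSpace A]
    [NormedAddCommGroup B] [NormedSpace ℝ B] [CompleteSpace B]
    [TopologicalSpace.SeparableSpace B]
    (u : A →ₗᵢ[ℝ] U) (j : A →ₗᵢ[ℝ] B),
    ∃ u' : B →ₗᵢ[ℝ] U, ∀ a : A, u' (j a) = u a

open TopologicalSpace Metric Set

section Small

/-- A separable (pseudo)metric space is small in `Type 0`. -/
lemma small_of_separable (α : Type*) [MetricSpace α] [SeparableSpace α] :
    Small.{0} α := by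
  rcases isEmpty_or_nonempty α with h | h
  · exact small_of_injective (f := fun a : α => (0 : ℕ)) fun a => h.elim a
  · obtain ⟨u, hu⟩ := TopologicalSpace.exists_dense_seq α
    refine small_of_injective (f := fun a : α => fun n : ℕ => dist a (u n)) ?_
    intro a b hab
    by_contra hne
    have hd : 0 < dist a b := dist_pos.mpr hne
    obtain ⟨n, hn⟩ := Metric.denseRange_iff.mp hu a (dist a b / 2) (by linarith)
    have h1 : dist a (u n) = dist b (u n) := by
      have := congrFun hab n
      simpa using this
    have : dist a b ≤ dist a (u n) + dist (u n) b := dist_triangle _ _ _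
    rw [dist_comm (u n) b, ← h1] at this
    linarith

end Small

section ShrinkNormed

variable (α : Type*) [NormedAddCommGroup α] [NormedSpace ℝ α] [Small.{0} α]

noncomputable instance Shrink.normedAddCommGroup : NormedAddCommGroup (Shrink.{0} α) :=
  inferInstance

noncomputable instance Shrink.normedSpace : NormedSpace ℝ (Shrink.{0} α) :=
  inferInstance

/-- The shrink of a normed space is isometrically isomorphic to it. -/
noncomputable def Shrink.linearIsometryEquiv : Shrink.{0} α ≃ₗᵢ[ℝ] α :=
  ⟨Shrink.linearEquiv ℝ α, fun _ => rfl⟩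

noncomputable instance Shrink.completeSpace' [CompleteSpace α] :
    CompleteSpace (Shrink.{0} α) :=
  (Shrink.linearIsometryEquiv α).toIsometryEquiv.completeSpace

instance Shrink.separableSpace' [SeparableSpace α] : SeparableSpace (Shrink.{0} α) :=
  (Shrink.linearIsometryEquiv α).symm.surjective.denseRange.separableSpace
    (Shrink.linearIsometryEquiv α).symm.continuous

end ShrinkNormed

lemma WithLp.prod_norm_one {α β : Type*} [SeminormedAddCommGroup α] [SeminormedAddCommGroup β]
    (f : WithLp 1 (α × β)) : ‖f‖ = ‖f.fst‖ + ‖f.snd‖ := by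
  rw [WithLp.prod_norm_eq_add (by norm_num)]
  norm_num

section Pushout

variable (X : Type) [NormedAddCommGroup X] [NormedSpace ℝ X]
variable (Z : Type) [NormedAddCommGroup Z] [NormedSpace ℝ Z]
variable (Y : Submodule ℝ X) (s : ↥Y →L[ℝ] Z)

/-- First inclusion into the `ℓ¹`-sum. -/
noncomputable def puInX : X →L[ℝ] WithLp 1 (X × Z) :=
  ((WithLp.prodContinuousLinearEquiv 1 ℝ X Z).symm : (X × Z) →L[ℝ] WithLp 1 (X × Z)).comp
    (ContinuousLinearMap.inl ℝ X Z)

/-- Second inclusion into the `ℓ¹`-sum. -/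
noncomputable def puInZ : Z →L[ℝ] WithLp 1 (X × Z) :=
  ((WithLp.prodContinuousLinearEquiv 1 ℝ X Z).symm : (X × Z) →L[ℝ] WithLp 1 (X × Z)).comp
    (ContinuousLinearMap.inr ℝ X Z)

lemma puNorm (x : X) (z : Z) : ‖puInX X Z x + puInZ X Z z‖ = ‖x‖ + ‖z‖ := by
  rw [WithLp.prod_norm_one]
  simp [puInX, puInZ]

/-- The map cutting out the pushout. -/
noncomputable def puPhi : ↥Y →L[ℝ] WithLp 1 (X × Z) :=
  (puInX X Z).comp Y.subtypeL - (puInZ X Z).comp s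

lemma puPhi_apply (y : Y) : puPhi X Z Y s y = puInX X Z (y : X) + puInZ X Z (-(s y)) := by
  simp [puPhi, sub_eq_add_neg]

/-- The subspace cutting out the pushout. -/
noncomputable def puDelta : Submodule ℝ (WithLp 1 (X × Z)) :=
  LinearMap.range (puPhi X Z Y s : ↥Y →ₗ[ℝ] WithLp 1 (X × Z))

lemma puDelta_closed [CompleteSpace Y] (hs : ∀ y : Y, ‖s y‖ ≤ ‖(y : Y)‖) :
    IsClosed ((puDelta X Z Y s : Submodule ℝ (WithLp 1 (X × Z))) : Set (WithLp 1 (X × Z))) := by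
  have hΔset : ((puDelta X Z Y s : Submodule ℝ (WithLp 1 (X × Z))) : Set (WithLp 1 (X × Z)))
      = Set.range (puPhi X Z Y s : ↥Y → WithLp 1 (X × Z)) := by
    ext v; simp [puDelta, LinearMap.mem_range]
  rw [hΔset]
  have hanti : AntilipschitzWith 1 (puPhi X Z Y s : ↥Y → WithLp 1 (X × Z)) := by
    apply AddMonoidHomClass.antilipschitz_of_bound (f := puPhi X Z Y s)
    intro y
    rw [NNReal.coe_one, one_mul, puPhi_apply, puNorm, norm_neg]
    have h0 := norm_nonneg (s y)
    have h4 : ‖((y : Y) : X)‖ = ‖(y : Y)‖ := rfl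
    rw [h4]
    linarith
  exact hanti.isClosed_range (puPhi X Z Y s).uniformContinuous

lemma puMk_le (v : WithLp 1 (X × Z)) :
    ‖(Submodule.Quotient.mk v : WithLp 1 (X × Z) ⧸ puDelta X Z Y s)‖ ≤ ‖v‖ :=
  Submodule.Quotient.norm_mk_le _ v

lemma puKey (hs : ∀ y : Y, ‖s y‖ ≤ ‖(y : Y)‖) (z : Z) :
    ‖z‖ ≤ ‖(Submodule.Quotient.mk (puInZ X Z z) : WithLp 1 (X × Z) ⧸ puDelta X Z Y s)‖ := by
  refine le_of_forall_pos_le_add ?_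
  intro ε hε
  obtain ⟨m, hm, hlt⟩ := Submodule.Quotient.norm_mk_lt
    (Submodule.Quotient.mk (puInZ X Z z) : WithLp 1 (X × Z) ⧸ puDelta X Z Y s) hε
  rw [Submodule.Quotient.eq] at hm
  obtain ⟨y, hy⟩ := hm
  have hmeq : m = puInX X Z (y : X) + puInZ X Z (z - s y) := by
    have h1 : (puPhi X Z Y s : ↥Y →ₗ[ℝ] WithLp 1 (X × Z)) y = puPhi X Z Y s y := rfl
    have h2 : m = puInZ X Z z + puPhi X Z Y s y := by
      rw [← h1, hy]; abel
    rw [h2, puPhi_apply, map_sub, map_neg]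
    abel
  have hnm : ‖(y : Y)‖ + ‖z‖ - ‖s y‖ ≤ ‖m‖ := by
    rw [hmeq, puNorm]
    have h3 : ‖z‖ - ‖s y‖ ≤ ‖z - s y‖ := by
      have := norm_sub_norm_le z (s y)
      linarith
    have h4 : ‖((y : Y) : X)‖ = ‖(y : Y)‖ := rfl
    rw [h4]
    linarith
  have h5 := hs y
  have h6 := norm_nonneg (y : Y)
  linarith

/-- The isometric inclusion of `Z` into the pushout. -/
noncomputable def puIota (hs : ∀ y : Y, ‖s y‖ ≤ ‖(y : Y)‖) :
    Z →ₗᵢ[ℝ] (WithLp 1 (X × Z) ⧸ puDelta X Z Y s) where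
  toLinearMap := (puDelta X Z Y s).mkQ ∘ₗ ((puInZ X Z : Z →L[ℝ] WithLp 1 (X × Z)) :
    Z →ₗ[ℝ] WithLp 1 (X × Z))
  norm_map' := by
    intro z
    refine le_antisymm ?_ (puKey X Z Y s hs z)
    have h2 : ‖puInZ X Z z‖ = ‖z‖ := by
      have := puNorm X Z 0 z
      simpa using this
    simpa [h2] using puMk_le X Z Y s (puInZ X Z z)

lemma puIota_apply (hs : ∀ y : Y, ‖s y‖ ≤ ‖(y : Y)‖) (z : Z) :
    puIota X Z Y s hs z = Submodule.Quotient.mk (puInZ X Z z) := rfl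

lemma puRel (hs : ∀ y : Y, ‖s y‖ ≤ ‖(y : Y)‖) (y : Y) :
    (Submodule.Quotient.mk (puInX X Z (y : X)) : WithLp 1 (X × Z) ⧸ puDelta X Z Y s) =
      puIota X Z Y s hs (s y) := by
  rw [puIota_apply, Submodule.Quotient.eq]
  refine ⟨y, ?_⟩
  have h1 : (puPhi X Z Y s : ↥Y →ₗ[ℝ] WithLp 1 (X × Z)) y = puPhi X Z Y s y := rfl
  rw [h1, puPhi_apply, map_neg]
  abel

lemma puSeparable [TopologicalSpace.SeparableSpace X] [TopologicalSpace.SeparableSpace Z] :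
    TopologicalSpace.SeparableSpace (WithLp 1 (X × Z) ⧸ puDelta X Z Y s) := by
  haveI : TopologicalSpace.SeparableSpace (WithLp 1 (X × Z)) :=
    ((WithLp.prodContinuousLinearEquiv 1 ℝ X Z).symm.surjective.denseRange.separableSpace
      (WithLp.prodContinuousLinearEquiv 1 ℝ X Z).symm.continuous)
  exact (Submodule.Quotient.mk_surjective
    (puDelta X Z Y s)).denseRange.separableSpace continuous_quot_mk

/-- The quotient map as a continuous linear map. -/
noncomputable def puQ : WithLp 1 (X × Z) →L[ℝ] (WithLp 1 (X × Z) ⧸ puDelta X Z Y s) :=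
  (puDelta X Z Y s).mkQ.mkContinuous 1 (fun v => by
    rw [one_mul, Submodule.mkQ_apply]
    exact puMk_le X Z Y s v)

lemma puQ_apply (v : WithLp 1 (X × Z)) : puQ X Z Y s v = Submodule.Quotient.mk v := rfl

end Pushout

theorem aux (E : Type*) [NormedAddCommGroup E] [NormedSpace ℝ E] [CompleteSpace E]
    (hE : UnivDispSeparable E)
    (X : Type) [NormedAddCommGroup X] [NormedSpace ℝ X] [CompleteSpace X]
    [SeparableSpace X] (Y : Submodule ℝ X) (hY : IsClosed (Y : Set X))
    (t : Y →L[ℝ] E) (ht : ‖t‖ ≤ 1) :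
    ∃ T : X →L[ℝ] E, (∀ y : Y, T y = t y) ∧ ‖T‖ ≤ 1 := by
  haveI : CompleteSpace Y := hY.completeSpace_coe
  set E₀ : Submodule ℝ E := (LinearMap.range (t : Y →ₗ[ℝ] E)).topologicalClosure with hE₀
  have hE₀closed : IsClosed (E₀ : Set E) := Submodule.isClosed_topologicalClosure _
  haveI : CompleteSpace E₀ := hE₀closed.completeSpace_coe
  haveI : SeparableSpace E₀ := by
    have h1 : IsSeparable (Set.range (t : Y → E)) := isSeparable_range t.continuous
    have h2 : IsSeparable (E₀ : Set E) := by
      rw [hE₀, Submodule.topologicalClosure_coe]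
      have h3 : (LinearMap.range (t : Y →ₗ[ℝ] E) : Set E) = Set.range (t : Y → E) := by
        ext x; simp [LinearMap.mem_range]
      rw [h3]
      exact h1.closure
    exact h2.separableSpace
  haveI : Small.{0} E₀ := small_of_separable _
  have hmem : ∀ y : Y, t y ∈ E₀ := fun y =>
    Submodule.le_topologicalClosure _ (LinearMap.mem_range.mpr ⟨y, rfl⟩)
  let eZ : Shrink.{0} ↥E₀ ≃ₗᵢ[ℝ] ↥E₀ := Shrink.linearIsometryEquiv ↥E₀
  let t₀ : Y →L[ℝ] E₀ := t.codRestrict E₀ hmem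
  let tZ : Y →L[ℝ] Shrink.{0} ↥E₀ := (eZ.symm.toLinearIsometry.toContinuousLinearMap).comp t₀
  have htZ : ∀ y : Y, ‖tZ y‖ ≤ ‖y‖ := by
    intro y
    have h1 : ‖tZ y‖ = ‖t₀ y‖ := eZ.symm.toLinearIsometry.norm_map _
    have h2 : ‖t₀ y‖ = ‖t y‖ := rfl
    calc ‖tZ y‖ = ‖t y‖ := by rw [h1, h2]
      _ ≤ ‖t‖ * ‖y‖ := t.le_opNorm y
      _ ≤ 1 * ‖y‖ := by gcongr
      _ = ‖y‖ := one_mul _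
  haveI : IsClosed ((puDelta X (Shrink.{0} ↥E₀) Y tZ :
      Submodule ℝ (WithLp 1 (X × Shrink.{0} ↥E₀))) : Set (WithLp 1 (X × Shrink.{0} ↥E₀))) :=
    puDelta_closed X (Shrink.{0} ↥E₀) Y tZ htZ
  haveI := puSeparable X (Shrink.{0} ↥E₀) Y tZ
  let u0 : Shrink.{0} ↥E₀ →ₗᵢ[ℝ] E := (E₀.subtypeₗᵢ).comp eZ.toLinearIsometry
  obtain ⟨u', hu'⟩ := hE (Shrink.{0} ↥E₀)
    (WithLp 1 (X × Shrink.{0} ↥E₀) ⧸ puDelta X (Shrink.{0} ↥E₀) Y tZ)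
    u0 (puIota X (Shrink.{0} ↥E₀) Y tZ htZ)
  let q : WithLp 1 (X × Shrink.{0} ↥E₀) →L[ℝ]
      (WithLp 1 (X × Shrink.{0} ↥E₀) ⧸ puDelta X (Shrink.{0} ↥E₀) Y tZ) :=
    puQ X (Shrink.{0} ↥E₀) Y tZ
  refine ⟨(u'.toContinuousLinearMap.comp q).comp (puInX X (Shrink.{0} ↥E₀)), ?_, ?_⟩
  · intro y
    have h1 : (u'.toContinuousLinearMap.comp q).comp (puInX X (Shrink.{0} ↥E₀)) (y : X) =
        u' (Submodule.Quotient.mk (puInX X (Shrink.{0} ↥E₀) (y : X))) := rfl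
    rw [h1, puRel X (Shrink.{0} ↥E₀) Y tZ htZ y, hu']
    show (eZ (tZ y) : E) = t y
    have h4 : eZ (tZ y) = t₀ y := by
      show eZ (eZ.symm (t₀ y)) = t₀ y
      exact eZ.apply_symm_apply _
    rw [h4]
    rfl
  · apply ContinuousLinearMap.opNorm_le_bound _ zero_le_one
    intro x
    rw [one_mul]
    have h1 : (u'.toContinuousLinearMap.comp q).comp (puInX X (Shrink.{0} ↥E₀)) x =
        u' (Submodule.Quotient.mk (puInX X (Shrink.{0} ↥E₀) x)) := rfl
    rw [h1, u'.norm_map]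
    calc ‖(Submodule.Quotient.mk (puInX X (Shrink.{0} ↥E₀) x) :
          WithLp 1 (X × Shrink.{0} ↥E₀) ⧸ puDelta X (Shrink.{0} ↥E₀) Y tZ)‖
        ≤ ‖puInX X (Shrink.{0} ↥E₀) x‖ := puMk_le _ _ _ _ _
      _ = ‖x‖ := by simpa using puNorm X (Shrink.{0} ↥E₀) x 0

/-- Every Banach space of universal disposition for separable spaces is `1`-separably
injective: operators from closed subspaces of separable Banach spaces extend with the
same norm bound. -/
theorem oneSeparablyInjective_of_univDispSeparable
    (E : Type*) [NormedAddCommGroup E] [NormedSpace ℝ E] [CompleteSpace E]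
    (hE : UnivDispSeparable E) :
    ∀ (X : Type) [NormedAddCommGroup X] [NormedSpace ℝ X] [CompleteSpace X]
      [TopologicalSpace.SeparableSpace X]
      (Y : Submodule ℝ X), IsClosed (Y : Set X) →
      ∀ t : Y →L[ℝ] E, ∃ T : X →L[ℝ] E, (∀ y : Y, T y = t y) ∧ ‖T‖ ≤ ‖t‖ := by
  intro X _ _ _ _ Y hY t
  rcases eq_or_ne t 0 with rfl | hne
  · exact ⟨0, fun y => rfl, by rw [ContinuousLinearMap.opNorm_zero]; exact ContinuousLinearMap.opNorm_nonneg _⟩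
  · have hpos : 0 < ‖t‖ := by
      rcases (norm_nonneg t).lt_or_eq with h | h
      · exact h
      · exact absurd ((ContinuousLinearMap.opNorm_zero_iff t).mp h.symm) hne
    have hs : ‖‖t‖⁻¹ • t‖ ≤ 1 := by
      refine (ContinuousLinearMap.opNorm_smul_le _ _).trans ?_
      rw [norm_inv, Real.norm_eq_abs, abs_of_nonneg (norm_nonneg t), inv_mul_cancel₀ hpos.ne']
    obtain ⟨S, hS1, hS2⟩ := aux E hE X Y hY (‖t‖⁻¹ • t) hs
    refine ⟨‖t‖ • S, fun y => ?_, ?_⟩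
    · show ‖t‖ • S y = t y
      rw [hS1 y]
      show ‖t‖ • (‖t‖⁻¹ • t y) = t y
      rw [smul_smul, mul_inv_cancel₀ hpos.ne', one_smul]
    · refine (ContinuousLinearMap.opNorm_smul_le _ _).trans ?_
      rw [Real.norm_eq_abs, abs_of_nonneg (norm_nonneg t)]
      calc ‖t‖ * ‖S‖ ≤ ‖t‖ * 1 := by gcongr
        _ = ‖t‖ := mul_one _
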